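/- For every integer N_s ≥ 2, the function f(λ) = (√(N_s+1) + λ)² / (λ²·N_s + (√(N_s+1) + λ)²) is convex on the interval [Θ(N_s), ∞), where Θ(N_s) = √(N_s+1)·(cos((1/3)·arccos(−(N_s−1)/(N_s+1))) − 1/2). -/

import Mathlib

/-- **Convexity of the concentration bound beyond the inflection point.**
For every integer `Ns ≥ 2`, the function
`f(λ) = (√(Ns+1) + λ)² / (λ² Ns + (√(Ns+1) + λ)²)` is convex on
`[Θ(Ns), ∞)`, where
`Θ(Ns) = √(Ns+1) (cos((1/3) arccos(−(Ns−1)/(Ns+1))) − 1/2)`. -/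
theorem bound_convexOn_Ici_theta
    (Ns : ℕ) (hNs : 2 ≤ Ns)
    (Θ : ℝ)
    (hΘ : Θ = Real.sqrt ((Ns : ℝ) + 1) *
      (Real.cos ((1 / 3) * Real.arccos (-(((Ns : ℝ) - 1) / ((Ns : ℝ) + 1)))) - 1 / 2)) :
    ConvexOn ℝ (Set.Ici Θ)
      (fun lam : ℝ => (Real.sqrt ((Ns : ℝ) + 1) + lam) ^ 2 /
        (lam ^ 2 * (Ns : ℝ) + (Real.sqrt ((Ns : ℝ) + 1) + lam) ^ 2)) := by
  set nn : ℝ := (Ns : ℝ) with hnn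
  have hnn2 : (2:ℝ) ≤ nn := by rw [hnn]; exact_mod_cast hNs
  set s : ℝ := Real.sqrt (nn + 1) with hsdef
  have hs2 : s ^ 2 = nn + 1 := Real.sq_sqrt (by linarith)
  have hspos : 0 < s := Real.sqrt_pos.mpr (by linarith)
  -- denominator always positive
  have hD : ∀ x : ℝ, 0 < x ^ 2 * nn + (s + x) ^ 2 := by
    intro x
    rcases eq_or_ne x 0 with h | h
    · subst h; rw [show (0:ℝ)^2 * nn + (s+0)^2 = s^2 by ring, hs2]; linarith
    · have h1 : 0 < x ^ 2 * nn := by positivity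
      nlinarith [sq_nonneg (s + x)]
  have hDne : ∀ x : ℝ, x ^ 2 * nn + (s + x) ^ 2 ≠ 0 := fun x => ne_of_gt (hD x)
  -- trig facts
  set c : ℝ := Real.cos ((1 / 3) * Real.arccos (-((nn - 1) / (nn + 1)))) with hcdef
  have hxlo : -(1:ℝ) ≤ -((nn - 1) / (nn + 1)) := by
    have : (nn - 1) / (nn + 1) ≤ 1 := by
      rw [div_le_one (by linarith)]; linarith
    linarith
  have hxhi : -((nn - 1) / (nn + 1)) ≤ 1 := by
    have : 0 ≤ (nn - 1) / (nn + 1) := div_nonneg (by linarith) (by linarith)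
    linarith
  have hcostriple : 4 * c ^ 3 - 3 * c = -((nn - 1) / (nn + 1)) := by
    have h3 : (3:ℝ) * ((1 / 3) * Real.arccos (-((nn - 1) / (nn + 1))))
        = Real.arccos (-((nn - 1) / (nn + 1))) := by ring
    have := Real.cos_three_mul ((1 / 3) * Real.arccos (-((nn - 1) / (nn + 1))))
    rw [h3, Real.cos_arccos hxlo hxhi] at this
    rw [hcdef]; linarith
  have hc' : (nn + 1) * (4 * c ^ 3 - 3 * c) = -(nn - 1) := by
    rw [hcostriple]; field_simp
  -- c ≥ 1/2, hence Θ ≥ 0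
  have hc_half : 1 / 2 ≤ c := by
    have harc_le : Real.arccos (-((nn - 1) / (nn + 1))) ≤ Real.pi := Real.arccos_le_pi _
    have harc_nonneg : 0 ≤ Real.arccos (-((nn - 1) / (nn + 1))) := Real.arccos_nonneg _
    have h1 : Real.cos (Real.pi / 3) ≤ c := by
      rw [hcdef]
      apply Real.cos_le_cos_of_nonneg_of_le_pi
      · positivity
      · linarith [Real.pi_pos]
      · linarith
    rwa [Real.cos_pi_div_three] at h1
  have hΘs : Θ = s * (c - 1 / 2) := by rw [hΘ]
  have hΘ0 : 0 ≤ Θ := by rw [hΘs]; nlinarith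
  -- the inflection cubic vanishes at Θ
  have hpΘ : 2 * Θ ^ 3 + 3 * s * Θ ^ 2 - s = 0 := by
    rw [hΘs]
    linear_combination (s * (2 * c ^ 3 - 3 / 2 * c + 1 / 2)) * hs2 + (s / 2) * hc'
  -- the cubic is nonnegative on [Θ, ∞)
  have hp : ∀ x : ℝ, Θ ≤ x → 0 ≤ 2 * x ^ 3 + 3 * s * x ^ 2 - s := by
    intro x hx
    have hx0 : 0 ≤ x := le_trans hΘ0 hx
    have h1 : 0 ≤ (x - Θ) * (x ^ 2 + x * Θ + Θ ^ 2) :=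
      mul_nonneg (sub_nonneg.2 hx)
        (add_nonneg (add_nonneg (sq_nonneg x) (mul_nonneg hx0 hΘ0)) (sq_nonneg Θ))
    have h2 : 0 ≤ s * ((x - Θ) * (x + Θ)) :=
      mul_nonneg hspos.le (mul_nonneg (sub_nonneg.2 hx) (add_nonneg hx0 hΘ0))
    nlinarith [h1, h2, hpΘ]
  -- first derivative
  have hu : ∀ x : ℝ, HasDerivAt (fun l : ℝ => (s + l) ^ 2) (2 * (s + x)) x := by
    intro x
    have h := ((hasDerivAt_id x).const_add s).fun_pow 2
    simpa using h
  have hv : ∀ x : ℝ, HasDerivAt (fun l : ℝ => l ^ 2 * nn + (s + l) ^ 2)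
      (2 * x * nn + 2 * (s + x)) x := by
    intro x
    have h1 : HasDerivAt (fun l : ℝ => l ^ 2 * nn) (2 * x * nn) x := by
      simpa using (hasDerivAt_pow 2 x).mul_const nn
    exact h1.add (hu x)
  have hf1 : ∀ x : ℝ, HasDerivAt (fun l : ℝ => (s + l) ^ 2 / (l ^ 2 * nn + (s + l) ^ 2))
      (-(2 * nn * s) * (x * (s + x)) / ((x ^ 2 * nn + (s + x) ^ 2) ^ 2)) x := by
    intro x
    have h := (hu x).fun_div (hv x) (hDne x)
    refine h.congr_deriv ?_
    rw [div_eq_div_iff (pow_ne_zero 2 (hDne x)) (pow_ne_zero 2 (hDne x))]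
    ring
  have hderiv1 : deriv (fun l : ℝ => (s + l) ^ 2 / (l ^ 2 * nn + (s + l) ^ 2))
      = fun x : ℝ => -(2 * nn * s) * (x * (s + x)) / ((x ^ 2 * nn + (s + x) ^ 2) ^ 2) :=
    funext fun x => (hf1 x).deriv
  -- second derivative
  have hf2 : ∀ x : ℝ, HasDerivAt
      (fun l : ℝ => -(2 * nn * s) * (l * (s + l)) / ((l ^ 2 * nn + (s + l) ^ 2) ^ 2))
      ((-(2 * nn * s) * (s + 2 * x) * ((x ^ 2 * nn + (s + x) ^ 2) ^ 2)
        - -(2 * nn * s) * (x * (s + x)) *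
          (2 * (x ^ 2 * nn + (s + x) ^ 2) * (2 * x * nn + 2 * (s + x))))
        / ((x ^ 2 * nn + (s + x) ^ 2) ^ 2) ^ 2) x := by
    intro x
    have hu2 : HasDerivAt (fun l : ℝ => -(2 * nn * s) * (l * (s + l)))
        (-(2 * nn * s) * (s + 2 * x)) x := by
      have hin : HasDerivAt (fun l : ℝ => l * (s + l)) (s + 2 * x) x := by
        have h := (hasDerivAt_id x).fun_mul ((hasDerivAt_id x).const_add s)
        simp only [id_eq] at h
        refine h.congr_deriv ?_
        ring
      simpa using hin.const_mul (-(2 * nn * s))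
    have hv2 : HasDerivAt (fun l : ℝ => (l ^ 2 * nn + (s + l) ^ 2) ^ 2)
        (2 * (x ^ 2 * nn + (s + x) ^ 2) * (2 * x * nn + 2 * (s + x))) x := by
      have := (hv x).fun_pow 2
      simpa [mul_comm, mul_assoc, mul_left_comm] using this
    exact hu2.div hv2 (pow_ne_zero 2 (hDne x))
  -- apply the convexity criterion
  apply convexOn_of_deriv2_nonneg' (convex_Ici Θ)
  · intro x hx
    exact ((hf1 x).differentiableAt).differentiableWithinAt
  · intro x hx
    rw [hderiv1]
    exact ((hf2 x).differentiableAt).differentiableWithinAt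
  · intro x hx
    have hx' : Θ ≤ x := hx
    have h2 : deriv^[2] (fun lam : ℝ => (s + lam) ^ 2 / (lam ^ 2 * nn + (s + lam) ^ 2)) x
        = deriv (deriv (fun lam : ℝ => (s + lam) ^ 2 / (lam ^ 2 * nn + (s + lam) ^ 2))) x := by
      simp [Function.iterate_succ, Function.iterate_zero]
    rw [h2, hderiv1, (hf2 x).deriv]
    have hkey : -(2 * nn * s) * (s + 2 * x) * ((x ^ 2 * nn + (s + x) ^ 2) ^ 2)
        - -(2 * nn * s) * (x * (s + x)) *
          (2 * (x ^ 2 * nn + (s + x) ^ 2) * (2 * x * nn + 2 * (s + x)))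
        = 2 * nn * s ^ 3 * (2 * x ^ 3 + 3 * s * x ^ 2 - s) * (x ^ 2 * nn + (s + x) ^ 2) := by
      linear_combination (-(2 * nn * s) * (x ^ 2 * nn + (s + x) ^ 2)
        * (2 * x ^ 3 + 3 * s * x ^ 2)) * hs2
    rw [hkey]
    apply div_nonneg _ (by positivity)
    have hnn0 : 0 < nn := by linarith
    have := hp x hx'
    positivity
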